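/- arXiv:cs/0202036 — 4 statements merged into one kernel-verified Lean document; each statement's English description precedes it below -/
import Mathlib

section
/- Let X be a set of variables, let V_0 be a finite set of constraint applications with constants over X in which the only constant occurring is 0 and in which every constraint used is complementive, and let V_f be the set of constraint applications obtained from V_0 by replacing every occurrence of the constant 0 by a fresh variable f ∉ X. Then for every assignment α : X → {0,1}: the assignment extending α by f ↦ 0 satisfies V_f if and only if α satisfies V_0, and the assignment extending α by f ↦ 1 satisfies V_f if and only if the complemented assignment ᾱ (defined by ᾱ(x) = 1 − α(x)) satisfies V_0. -/
/-- A constraint application with constants over a variable set `X`: a `k`-ary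
Boolean constraint `C` whose arguments are variables (`Sum.inl`) or Boolean
constants (`Sum.inr`). -/
structure CAppC (X : Type) where
  k : ℕ
  C : (Fin k → Bool) → Bool
  args : Fin k → X ⊕ Bool

/-- An assignment `I` satisfies a constraint application with constants. -/
def CAppC.sat {X : Type} (A : CAppC X) (I : X → Bool) : Prop :=
  A.C (fun i => Sum.elim I id (A.args i)) = true

/-- A constraint application over `X ⊕ Unit`: all variable arguments kept,
every constant argument replaced by the fresh variable `f = Sum.inr ()`. -/
structure CApp (X : Type) where
  k : ℕ
  C : (Fin k → Bool) → Bool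
  vars : Fin k → X

/-- An assignment `I` satisfies a constraint application. -/
def CApp.sat {X : Type} (A : CApp X) (I : X → Bool) : Prop :=
  A.C (fun i => I (A.vars i)) = true

/-- Replace every constant occurring in `A` by the fresh variable
`Sum.inr ()`. -/
def CAppC.toF {X : Type} (A : CAppC X) : CApp (X ⊕ Unit) :=
  ⟨A.k, A.C, fun i => Sum.elim Sum.inl (fun _ => Sum.inr ()) (A.args i)⟩

/-- Let `V_0` be a finite set of constraint applications with constants whose
only occurring constant is `0` and whose constraints are all complementive,
and let `V_f` replace every constant `0` by a fresh variable `f`. Then for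
every assignment `α`: extending `α` by `f ↦ 0` satisfies `V_f` iff `α`
satisfies `V_0`, and extending `α` by `f ↦ 1` satisfies `V_f` iff the
complemented assignment `ᾱ` satisfies `V_0`. -/
theorem stmt_8 {X : Type} (V0 : Finset (CAppC X))
    (hconst : ∀ A ∈ V0, ∀ i : Fin A.k, A.args i ≠ Sum.inr true)
    (hcompl : ∀ A ∈ V0, ∀ s : Fin A.k → Bool, A.C s = A.C (fun i => !(s i))) :
    ∀ α : X → Bool,
      ((∀ A ∈ V0, (CAppC.toF A).sat (Sum.elim α fun _ => false)) ↔
        (∀ A ∈ V0, A.sat α)) ∧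
      ((∀ A ∈ V0, (CAppC.toF A).sat (Sum.elim α fun _ => true)) ↔
        (∀ A ∈ V0, A.sat fun x => !(α x))) := by
  intro α
  constructor
  · apply forall₂_congr
    intro A hA
    unfold CAppC.toF CApp.sat CAppC.sat
    have : (fun i => Sum.elim α (fun _ => false)
        (Sum.elim Sum.inl (fun _ => Sum.inr ()) (A.args i)))
        = fun i => Sum.elim α id (A.args i) := by
      funext i
      rcases h : A.args i with x | b
      · rfl
      · cases b
        · rfl
        · exact absurd h (hconst A hA i)
    rw [this]
  · apply forall₂_congr
    intro A hA
    unfold CAppC.toF CApp.sat CAppC.sat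
    have : (fun i => Sum.elim α (fun _ => true)
        (Sum.elim Sum.inl (fun _ => Sum.inr ()) (A.args i)))
        = fun i => !(Sum.elim (fun x => !(α x)) id (A.args i)) := by
      funext i
      rcases h : A.args i with x | b
      · simp
      · cases b
        · rfl
        · exact absurd h (hconst A hA i)
    rw [this]
    show (A.C fun i => !Sum.elim (fun x => !α x) id (A.args i)) = true ↔ _
    rw [← hcompl A hA]
end

section
/- Let V_0 be a finite set of constraint applications with constants over the two variables x, y in which the only constant occurring is 0, in which every constraint used is complementive, and such that an assignment satisfies V_0 if and only if it satisfies x → y. Let V_f be obtained from V_0 by replacing every occurrence of the constant 0 by a fresh variable f. Then an assignment (f, x, y) ∈ {0,1}^3 satisfies V_f if and only if it satisfies (¬f ∧ (x → y)) ∨ (f ∧ (y → x)). -/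
/-- Let `V_0` be a finite set of constraint applications with constants over
the variables `x = 0`, `y = 1` whose only occurring constant is `0`, whose
constraints are all complementive, and which is equivalent to `x → y`. Let
`V_f` replace every constant `0` by a fresh variable `f`. Then `(f, x, y)`
satisfies `V_f` iff it satisfies `(¬f ∧ (x → y)) ∨ (f ∧ (y → x))`. -/
theorem stmt_9 (V0 : Finset (CAppC (Fin 2)))
    (hconst : ∀ A ∈ V0, ∀ i : Fin A.k, A.args i ≠ Sum.inr true)
    (hcompl : ∀ A ∈ V0, ∀ s : Fin A.k → Bool, A.C s = A.C (fun i => !(s i)))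
    (hequiv : ∀ I : Fin 2 → Bool, (∀ A ∈ V0, A.sat I) ↔ (!(I 0) || I 1) = true) :
    ∀ f x y : Bool,
      (∀ A ∈ V0, (CAppC.toF A).sat (Sum.elim ![x, y] fun _ => f)) ↔
        ((!f && (!x || y)) || (f && (!y || x))) = true := by
  intro f x y
  cases f with
  | false =>
    have key : ∀ A ∈ V0,
        ((CAppC.toF A).sat (Sum.elim ![x, y] fun _ => false) ↔ A.sat ![x, y]) := by
      intro A hA
      unfold CApp.sat CAppC.toF CAppC.sat
      have hfun : (fun i => Sum.elim ![x, y] (fun _ => false)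
            (Sum.elim Sum.inl (fun _ => Sum.inr (β := Unit) ()) (A.args i)) :
            Fin A.k → Bool)
          = fun i => Sum.elim ![x, y] id (A.args i) := by
        funext i
        cases h : A.args i with
        | inl v => simp
        | inr b =>
          cases b with
          | false => simp
          | true => exact absurd h (hconst A hA i)
      rw [hfun]
    rw [forall₂_congr key, hequiv ![x, y]]
    simp
  | true =>
    have key : ∀ A ∈ V0,
        ((CAppC.toF A).sat (Sum.elim ![x, y] fun _ => true) ↔ A.sat ![!x, !y]) := by
      intro A hA
      unfold CApp.sat CAppC.toF CAppC.sat
      show (A.C fun i => Sum.elim ![x, y] (fun _ => true)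
          (Sum.elim Sum.inl (fun _ => Sum.inr (β := Unit) ()) (A.args i))) = true ↔ _
      rw [hcompl A hA (fun i => Sum.elim ![x, y] (fun _ => true)
          (Sum.elim Sum.inl (fun _ => Sum.inr (β := Unit) ()) (A.args i)))]
      have hfun : (fun i => !(Sum.elim ![x, y] (fun _ => true)
            (Sum.elim Sum.inl (fun _ => Sum.inr (β := Unit) ()) (A.args i))) :
            Fin A.k → Bool)
          = fun i => Sum.elim ![!x, !y] id (A.args i) := by
        funext i
        cases h : A.args i with
        | inl v => fin_cases v <;> simp
        | inr b =>
          cases b with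
          | false => simp
          | true => exact absurd h (hconst A hA i)
      rw [hfun]
    rw [forall₂_congr key, hequiv ![!x, !y]]
    cases x <;> cases y <;> simp
end

section
/- Let V_0 be a finite set of constraint applications with constants over the three variables x, y, z in which the only constant occurring is 0, in which every constraint used is complementive, and such that an assignment satisfies V_0 if and only if it satisfies (¬x ∧ ¬y ∧ ¬z) ∨ (x ∧ ¬y ∧ z) ∨ (¬x ∧ y ∧ z). Let V_f be obtained from V_0 by replacing every occurrence of the constant 0 by a fresh variable f, and let W(u,v) be obtained from V_f by substituting the variable x by f, y by u, and z by v. Then an assignment (f, u, v) ∈ {0,1}^3 satisfies W(u,v) if and only if u = v. -/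
/-- Let `V_0` be a finite set of constraint applications with constants over
the variables `x = 0`, `y = 1`, `z = 2` whose only occurring constant is `0`,
whose constraints are all complementive, and which is equivalent to
`(¬x ∧ ¬y ∧ ¬z) ∨ (x ∧ ¬y ∧ z) ∨ (¬x ∧ y ∧ z)`. Let `V_f` replace every
constant `0` by a fresh variable `f` and let `W(u,v)` substitute `x := f`,
`y := u`, `z := v` in `V_f`. Then `(f, u, v)` satisfies `W(u,v)` iff
`u = v`. -/
theorem stmt_10 (V0 : Finset (CAppC (Fin 3)))
    (hconst : ∀ A ∈ V0, ∀ i : Fin A.k, A.args i ≠ Sum.inr true)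
    (hcompl : ∀ A ∈ V0, ∀ s : Fin A.k → Bool, A.C s = A.C (fun i => !(s i)))
    (hequiv : ∀ I : Fin 3 → Bool, (∀ A ∈ V0, A.sat I) ↔
      ((!(I 0) && !(I 1) && !(I 2)) || (I 0 && !(I 1) && I 2) ||
        (!(I 0) && I 1 && I 2)) = true) :
    ∀ f u v : Bool,
      (∀ A ∈ V0, (CAppC.toF A).sat (Sum.elim ![f, u, v] fun _ => f)) ↔ u = v := by
  intro f u v
  cases f with
  | false =>
    have h : (∀ A ∈ V0, (CAppC.toF A).sat (Sum.elim ![false, u, v] fun _ => false)) ↔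
        (∀ A ∈ V0, A.sat ![false, u, v]) := by
      refine forall₂_congr fun A hA => ?_
      have harg : (fun i : Fin A.k => Sum.elim ![false, u, v] (fun _ => false)
          ((Sum.elim Sum.inl (fun _ => Sum.inr ()) (A.args i) : Fin 3 ⊕ Unit))) =
          fun i => Sum.elim ![false, u, v] id (A.args i) := by
        funext i
        rcases hi : A.args i with j | b
        · simp
        · cases b
          · simp
          · exact absurd hi (hconst A hA i)
      simp only [CApp.sat, CAppC.sat, CAppC.toF]
      rw [harg]
    rw [h, hequiv]
    cases u <;> cases v <;> simp
  | true =>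
    have h : (∀ A ∈ V0, (CAppC.toF A).sat (Sum.elim ![true, u, v] fun _ => true)) ↔
        (∀ A ∈ V0, A.sat ![false, !u, !v]) := by
      refine forall₂_congr fun A hA => ?_
      have harg : (fun i : Fin A.k => !(Sum.elim ![true, u, v] (fun _ => true)
          ((Sum.elim Sum.inl (fun _ => Sum.inr ()) (A.args i) : Fin 3 ⊕ Unit)))) =
          fun i => Sum.elim ![false, !u, !v] id (A.args i) := by
        funext i
        rcases hi : A.args i with j | b
        · fin_cases j <;> simp
        · cases b
          · simp
          · exact absurd hi (hconst A hA i)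
      simp only [CApp.sat, CAppC.sat, CAppC.toF]
      rw [hcompl A hA (fun i : Fin A.k => Sum.elim ![true, u, v] (fun _ => true)
          ((Sum.elim Sum.inl (fun _ => Sum.inr ()) (A.args i) : Fin 3 ⊕ Unit))), harg]
    rw [h, hequiv]
    cases u <;> cases v <;> simp
end

section
/- Let G and H be simple graphs on the vertex set {1,…,n}, and over the variables x_1,…,x_n define S(G) = {x_i ∨ x_j : {i,j} is an edge of G} and likewise S(H), where x ∨ y is the binary OR constraint. Then G and H are isomorphic as graphs if and only if there exists a permutation π of {x_1,…,x_n} such that π(S(G)) is equivalent to S(H). -/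
/-- Renaming the variables of a constraint application by a permutation `π`. -/
def CApp.rename {X : Type} (π : Equiv.Perm X) (A : CApp X) : CApp X :=
  ⟨A.k, A.C, fun i => π (A.vars i)⟩

/-- The binary OR constraint applied to the variables `x_i`, `x_j`. -/
def orApp {n : ℕ} (i j : Fin n) : CApp (Fin n) :=
  ⟨2, fun v => v 0 || v 1, ![i, j]⟩

/-- The encoding `S(G) = {x_i ∨ x_j : {i,j} ∈ E(G)}` of a graph `G`. -/
def SOr {n : ℕ} (G : SimpleGraph (Fin n)) : Set (CApp (Fin n)) :=
  {A | ∃ i j : Fin n, G.Adj i j ∧ A = orApp i j}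

lemma satRename_iff {n : ℕ} (G : SimpleGraph (Fin n)) (π : Equiv.Perm (Fin n))
    (I : Fin n → Bool) :
    (∀ A ∈ SOr G, (A.rename π).sat I) ↔
      ∀ i j : Fin n, G.Adj i j → (I (π i) || I (π j)) = true := by
  constructor
  · intro h i j hij
    simpa [CApp.sat, CApp.rename, orApp] using h (orApp i j) ⟨i, j, hij, rfl⟩
  · rintro h A ⟨i, j, hij, rfl⟩
    simpa [CApp.sat, CApp.rename, orApp] using h i j hij

lemma sat_iff {n : ℕ} (H : SimpleGraph (Fin n)) (I : Fin n → Bool) :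
    (∀ A ∈ SOr H, A.sat I) ↔
      ∀ i j : Fin n, H.Adj i j → (I i || I j) = true := by
  constructor
  · intro h i j hij
    simpa [CApp.sat, orApp] using h (orApp i j) ⟨i, j, hij, rfl⟩
  · rintro h A ⟨i, j, hij, rfl⟩
    simpa [CApp.sat, orApp] using h i j hij

lemma cover_iff {n : ℕ} (K : SimpleGraph (Fin n)) (a b : Fin n) :
    (∀ i j : Fin n, K.Adj i j →
      ((!(decide (i = a) || decide (i = b))) || (!(decide (j = a) || decide (j = b)))) = true)
      ↔ ¬ K.Adj a b := by
  constructor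
  · intro h hab
    simpa using h a b hab
  · intro hab i j hij
    by_contra hc
    simp only [Bool.or_eq_true, Bool.not_eq_true', Bool.or_eq_false_iff,
      decide_eq_false_iff_not] at hc
    push_neg at hc
    obtain ⟨hi, hj⟩ := hc
    have hi' := or_iff_not_imp_left.mpr hi
    have hj' := or_iff_not_imp_left.mpr hj
    clear hi hj
    rcases hi' with h1 | h1 <;> rcases hj' with h2 | h2 <;> subst h1 <;> subst h2
    · exact K.irrefl hij
    · exact hab hij
    · exact hab hij.symm
    · exact K.irrefl hij

/-- Two graphs `G` and `H` on vertex set `{1,…,n}` are isomorphic iff there is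
a permutation `π` of the variables `x_1, …, x_n` such that `π(S(G))` is
equivalent to `S(H)`. -/
theorem stmt_14 {n : ℕ} (G H : SimpleGraph (Fin n)) :
    Nonempty (G ≃g H) ↔
      ∃ π : Equiv.Perm (Fin n), ∀ I : Fin n → Bool,
        (∀ A ∈ SOr G, (A.rename π).sat I) ↔ (∀ A ∈ SOr H, A.sat I) := by
  constructor
  · rintro ⟨φ⟩
    refine ⟨φ.toEquiv, fun I => ?_⟩
    rw [satRename_iff, sat_iff]
    constructor
    · intro h i j hij
      have := h (φ.toEquiv.symm i) (φ.toEquiv.symm j)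
        (by exact φ.symm.map_rel_iff.mpr hij)
      simpa using this
    · intro h i j hij
      exact h (φ i) (φ j) (φ.map_rel_iff.mpr hij)
  · rintro ⟨π, hπ⟩
    refine ⟨⟨π, fun {a b} => ?_⟩⟩
    have := hπ (fun x => !(decide (x = π a) || decide (x = π b)))
    rw [satRename_iff, sat_iff] at this
    have hL : (∀ i j : Fin n, G.Adj i j →
        ((!(decide (π i = π a) || decide (π i = π b))) ||
         (!(decide (π j = π a) || decide (π j = π b)))) = true) ↔ ¬ G.Adj a b := by
      simp only [π.apply_eq_iff_eq]
      exact cover_iff G a b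
    have hR := cover_iff H (π a) (π b)
    rw [hL, hR] at this
    exact not_iff_not.mp this.symm
end
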